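/- Let n ≥ 2. There exists a weakly circle-preserving map T : S² → S^n whose image T(S²) consists of exactly 4 points that do not all lie on a single circle of S^n. -/

import Mathlib

open EuclideanSpace RealInnerProductSpace

private lemma eapp {m : ℕ} {x y : EuclideanSpace ℝ (Fin m)} (h : x = y) (i : Fin m) :
    x i = y i := by rw [h]

private lemma three_le_finrank_of_single_mem {m : ℕ}
    {D : Submodule ℝ (EuclideanSpace ℝ (Fin m))} {i j k : Fin m}
    (hij : i ≠ j) (hik : i ≠ k) (hjk : j ≠ k)
    (hi : EuclideanSpace.single i (1:ℝ) ∈ D)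
    (hj : EuclideanSpace.single j (1:ℝ) ∈ D)
    (hk : EuclideanSpace.single k (1:ℝ) ∈ D) :
    3 ≤ Module.finrank ℝ D := by
  have hinj : Function.Injective ![i, j, k] := by
    intro a b hab
    fin_cases a <;> fin_cases b <;> simp_all
  have li : LinearIndependent ℝ
      (fun t : Fin 3 => EuclideanSpace.single (![i, j, k] t) (1:ℝ)) :=
    ((EuclideanSpace.orthonormal_single (𝕜 := ℝ) (ι := Fin m)).comp _ hinj).linearIndependent
  have hle : Submodule.span ℝ
      (Set.range fun t : Fin 3 => EuclideanSpace.single (![i, j, k] t) (1:ℝ)) ≤ D := by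
    rw [Submodule.span_le]
    rintro x ⟨t, rfl⟩
    fin_cases t <;> simpa
  have h3 : Module.finrank ℝ (Submodule.span ℝ
      (Set.range fun t : Fin 3 => EuclideanSpace.single (![i, j, k] t) (1:ℝ))) = 3 := by
    rw [finrank_span_eq_card li]; simp
  calc (3:ℕ) = _ := h3.symm
    _ ≤ _ := Submodule.finrank_mono hle

private lemma li_pair {m : ℕ} {a b : EuclideanSpace ℝ (Fin m)} {i j : Fin m}
    (h1 : a i ≠ 0) (h2 : b i = 0) (h3 : a j = 0) (h4 : b j ≠ 0) :
    LinearIndependent ℝ ![a, b] := by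
  rw [LinearIndependent.pair_iff]
  intro s t hst
  have hs : s = 0 := by
    have h := eapp hst i
    simp only [PiLp.add_apply, PiLp.smul_apply, PiLp.zero_apply, h2, smul_eq_mul,
      mul_zero, add_zero] at h
    exact (mul_eq_zero.1 h).resolve_right h1
  have ht : t = 0 := by
    have h := eapp hst j
    simp only [PiLp.add_apply, PiLp.smul_apply, PiLp.zero_apply, h3, smul_eq_mul,
      mul_zero, zero_add] at h
    exact (mul_eq_zero.1 h).resolve_right h4
  exact ⟨hs, ht⟩

private lemma finrank_span_pair_two {m : ℕ} {a b : EuclideanSpace ℝ (Fin m)}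
    (h : LinearIndependent ℝ ![a, b]) :
    Module.finrank ℝ (Submodule.span ℝ ({a, b} : Set (EuclideanSpace ℝ (Fin m)))) = 2 := by
  rw [← Matrix.range_cons_cons_empty a b, finrank_span_eq_card h]
  simp

private lemma e3_ext {u v : EuclideanSpace ℝ (Fin 3)}
    (h0 : u 0 = v 0) (h1 : u 1 = v 1) (h2 : u 2 = v 2) : u = v := by
  ext t
  fin_cases t
  · exact h0
  · exact h1
  · exact h2

/-- If an affine subspace of `ℝ³` contains the north pole, the south pole, a unit vector `u`
with `u 1 = 0` distinct from the poles, and a unit vector `v` with `v 1 ≠ 0`, then its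
direction has rank at least `3`. -/
private lemma three_le_of_four_classes (A : AffineSubspace ℝ (EuclideanSpace ℝ (Fin 3)))
    (h1 : EuclideanSpace.single 2 (1:ℝ) ∈ A)
    (h2 : -EuclideanSpace.single 2 (1:ℝ) ∈ A)
    {u v : EuclideanSpace ℝ (Fin 3)}
    (huA : u ∈ A) (hun : ‖u‖ = 1) (hu1 : u 1 = 0)
    (huN : u ≠ EuclideanSpace.single 2 1) (huS : u ≠ -EuclideanSpace.single 2 1)
    (hvA : v ∈ A) (hv1 : v 1 ≠ 0) :
    3 ≤ Module.finrank ℝ A.direction := by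
  have s00 : EuclideanSpace.single (0 : Fin 3) (1:ℝ) 0 = 1 := by
    rw [EuclideanSpace.single_apply, if_pos rfl]
  have s01 : EuclideanSpace.single (0 : Fin 3) (1:ℝ) 1 = 0 := by
    rw [EuclideanSpace.single_apply, if_neg (by decide)]
  have s02 : EuclideanSpace.single (0 : Fin 3) (1:ℝ) 2 = 0 := by
    rw [EuclideanSpace.single_apply, if_neg (by decide)]
  have s10 : EuclideanSpace.single (1 : Fin 3) (1:ℝ) 0 = 0 := by
    rw [EuclideanSpace.single_apply, if_neg (by decide)]
  have s11 : EuclideanSpace.single (1 : Fin 3) (1:ℝ) 1 = 1 := by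
    rw [EuclideanSpace.single_apply, if_pos rfl]
  have s12 : EuclideanSpace.single (1 : Fin 3) (1:ℝ) 2 = 0 := by
    rw [EuclideanSpace.single_apply, if_neg (by decide)]
  have s20 : EuclideanSpace.single (2 : Fin 3) (1:ℝ) 0 = 0 := by
    rw [EuclideanSpace.single_apply, if_neg (by decide)]
  have s21 : EuclideanSpace.single (2 : Fin 3) (1:ℝ) 1 = 0 := by
    rw [EuclideanSpace.single_apply, if_neg (by decide)]
  have s22 : EuclideanSpace.single (2 : Fin 3) (1:ℝ) 2 = 1 := by
    rw [EuclideanSpace.single_apply, if_pos rfl]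
  have hf2 : EuclideanSpace.single (2 : Fin 3) (1:ℝ) ∈ A.direction := by
    have hmem := AffineSubspace.vsub_mem_direction h1 h2
    have he : EuclideanSpace.single (2 : Fin 3) (1:ℝ)
        = (2:ℝ)⁻¹ • (EuclideanSpace.single (2 : Fin 3) (1:ℝ)
            -ᵥ -EuclideanSpace.single (2 : Fin 3) (1:ℝ)) := by
      rw [vsub_eq_sub, sub_neg_eq_add]
      ext t
      simp only [PiLp.smul_apply, PiLp.add_apply, smul_eq_mul]
      ring
    rw [he]
    exact Submodule.smul_mem _ _ hmem
  -- `u 0 ≠ 0`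
  have hu0 : u 0 ≠ 0 := by
    intro h0
    have hn : (∑ t : Fin 3, ‖u t‖ ^ 2) = 1 := by
      have h := hun
      rw [EuclideanSpace.norm_eq] at h
      have hnn : (0:ℝ) ≤ ∑ t : Fin 3, ‖u t‖ ^ 2 := by positivity
      nlinarith [Real.sq_sqrt hnn]
    rw [Fin.sum_univ_three] at hn
    rw [h0, hu1] at hn
    simp only [norm_zero, Real.norm_eq_abs, sq_abs] at hn
    have hsq : (u 2 - 1) * (u 2 + 1) = 0 := by nlinarith
    rcases mul_eq_zero.1 hsq with h | h
    · exact huN (e3_ext (by rw [h0, s20]) (by rw [hu1, s21]) (by rw [s22]; linarith))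
    · refine huS (e3_ext ?_ ?_ ?_)
      · show u 0 = -(EuclideanSpace.single (2 : Fin 3) (1:ℝ) 0); rw [h0, s20]; ring
      · show u 1 = -(EuclideanSpace.single (2 : Fin 3) (1:ℝ) 1); rw [hu1, s21]; ring
      · show u 2 = -(EuclideanSpace.single (2 : Fin 3) (1:ℝ) 2); rw [s22]; linarith
  -- `single 0 1 ∈ direction`
  have hw2 : u - (u 2) • EuclideanSpace.single (2 : Fin 3) (1:ℝ) ∈ A.direction := by
    have hw : u - EuclideanSpace.single (2 : Fin 3) (1:ℝ) ∈ A.direction := by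
      have := AffineSubspace.vsub_mem_direction huA h1
      rwa [vsub_eq_sub] at this
    have he : u - (u 2) • EuclideanSpace.single (2 : Fin 3) (1:ℝ)
        = (u - EuclideanSpace.single (2 : Fin 3) (1:ℝ))
          + (1 - u 2) • EuclideanSpace.single (2 : Fin 3) (1:ℝ) := by
      ext t
      simp only [PiLp.sub_apply, PiLp.add_apply, PiLp.smul_apply, smul_eq_mul]
      ring
    rw [he]
    exact Submodule.add_mem _ hw (Submodule.smul_mem _ _ hf2)
  have hu2e : u - (u 2) • EuclideanSpace.single (2 : Fin 3) (1:ℝ)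
      = (u 0) • EuclideanSpace.single (0 : Fin 3) (1:ℝ) := by
    refine e3_ext ?_ ?_ ?_
    · simp only [PiLp.sub_apply, PiLp.smul_apply, smul_eq_mul, s20, s00]; ring
    · simp only [PiLp.sub_apply, PiLp.smul_apply, smul_eq_mul, s21, s01, hu1]; ring
    · simp only [PiLp.sub_apply, PiLp.smul_apply, smul_eq_mul, s22, s02]; ring
  have hf0 : EuclideanSpace.single (0 : Fin 3) (1:ℝ) ∈ A.direction := by
    have hm := Submodule.smul_mem _ (u 0)⁻¹ hw2
    rw [hu2e, smul_smul, inv_mul_cancel₀ hu0, one_smul] at hm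
    exact hm
  -- `single 1 1 ∈ direction`
  have hv2 : v - (v 2) • EuclideanSpace.single (2 : Fin 3) (1:ℝ)
      - (v 0) • EuclideanSpace.single (0 : Fin 3) (1:ℝ) ∈ A.direction := by
    have hw : v - EuclideanSpace.single (2 : Fin 3) (1:ℝ) ∈ A.direction := by
      have := AffineSubspace.vsub_mem_direction hvA h1
      rwa [vsub_eq_sub] at this
    have he : v - (v 2) • EuclideanSpace.single (2 : Fin 3) (1:ℝ)
        - (v 0) • EuclideanSpace.single (0 : Fin 3) (1:ℝ)
        = ((v - EuclideanSpace.single (2 : Fin 3) (1:ℝ))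
            + (1 - v 2) • EuclideanSpace.single (2 : Fin 3) (1:ℝ))
          + (-(v 0)) • EuclideanSpace.single (0 : Fin 3) (1:ℝ) := by
      ext t
      simp only [PiLp.sub_apply, PiLp.add_apply, PiLp.smul_apply, smul_eq_mul]
      ring
    rw [he]
    exact Submodule.add_mem _ (Submodule.add_mem _ hw (Submodule.smul_mem _ _ hf2))
      (Submodule.smul_mem _ _ hf0)
  have hv2e : v - (v 2) • EuclideanSpace.single (2 : Fin 3) (1:ℝ)
      - (v 0) • EuclideanSpace.single (0 : Fin 3) (1:ℝ)
      = (v 1) • EuclideanSpace.single (1 : Fin 3) (1:ℝ) := by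
    refine e3_ext ?_ ?_ ?_
    · simp only [PiLp.sub_apply, PiLp.smul_apply, smul_eq_mul, s20, s00, s10]; ring
    · simp only [PiLp.sub_apply, PiLp.smul_apply, smul_eq_mul, s21, s01, s11]; ring
    · simp only [PiLp.sub_apply, PiLp.smul_apply, smul_eq_mul, s22, s02, s12]; ring
  have hf1 : EuclideanSpace.single (1 : Fin 3) (1:ℝ) ∈ A.direction := by
    have hm := Submodule.smul_mem _ (v 1)⁻¹ hv2
    rw [hv2e, smul_smul, inv_mul_cancel₀ hv1, one_smul] at hm
    exact hm
  exact three_le_finrank_of_single_mem (by decide) (by decide) (by decide) hf0 hf1 hf2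

set_option maxHeartbeats 2000000

/-- Sharpness of the five-point theorem: for `n ≥ 2` there exists a weakly circle-preserving
map `T : S² → S^n` whose image consists of exactly `4` points not all lying on one circle. -/
theorem exists_weakly_circle_preserving_four_points (n : ℕ) (hn : 2 ≤ n) :
    ∃ T : (Metric.sphere (0 : EuclideanSpace ℝ (Fin 3)) 1) →
          (Metric.sphere (0 : EuclideanSpace ℝ (Fin (n + 1))) 1),
      (∀ A : AffineSubspace ℝ (EuclideanSpace ℝ (Fin 3)),
        Module.finrank ℝ A.direction = 2 → (∃ x ∈ A, ‖x‖ < 1) →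
        ∃ A' : AffineSubspace ℝ (EuclideanSpace ℝ (Fin (n + 1))),
          Module.finrank ℝ A'.direction = 2 ∧ (∃ x ∈ A', ‖x‖ < 1) ∧
          ∀ p : (Metric.sphere (0 : EuclideanSpace ℝ (Fin 3)) 1),
            (p : EuclideanSpace ℝ (Fin 3)) ∈ A → (T p : EuclideanSpace ℝ (Fin (n + 1))) ∈ A') ∧
      (Set.range T).encard = 4 ∧
      ¬ ∃ A' : AffineSubspace ℝ (EuclideanSpace ℝ (Fin (n + 1))),
          Module.finrank ℝ A'.direction = 2 ∧ (∃ x ∈ A', ‖x‖ < 1) ∧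
          ∀ p : (Metric.sphere (0 : EuclideanSpace ℝ (Fin 3)) 1),
            (T p : EuclideanSpace ℝ (Fin (n + 1))) ∈ A' := by
  classical
  -- indices in `Fin (n+1)`
  set i0 : Fin (n+1) := ⟨0, by omega⟩ with hi0
  set i1 : Fin (n+1) := ⟨1, by omega⟩ with hi1
  set i2 : Fin (n+1) := ⟨2, by omega⟩ with hi2
  have hi01 : i0 ≠ i1 := by simp [hi0, hi1, Fin.ext_iff]
  have hi02 : i0 ≠ i2 := by simp [hi0, hi2, Fin.ext_iff]
  have hi12 : i1 ≠ i2 := by simp [hi1, hi2, Fin.ext_iff]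
  -- target points
  set g0 : EuclideanSpace ℝ (Fin (n+1)) := EuclideanSpace.single i0 1 with hg0
  set g1 : EuclideanSpace ℝ (Fin (n+1)) := EuclideanSpace.single i1 1 with hg1
  set g2 : EuclideanSpace ℝ (Fin (n+1)) := EuclideanSpace.single i2 1 with hg2
  have hg0s : g0 ∈ Metric.sphere (0 : EuclideanSpace ℝ (Fin (n+1))) 1 := by
    rw [mem_sphere_zero_iff_norm, hg0, EuclideanSpace.norm_single]; norm_num
  have hng0s : -g0 ∈ Metric.sphere (0 : EuclideanSpace ℝ (Fin (n+1))) 1 := by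
    rw [mem_sphere_zero_iff_norm, norm_neg, hg0, EuclideanSpace.norm_single]; norm_num
  have hg1s : g1 ∈ Metric.sphere (0 : EuclideanSpace ℝ (Fin (n+1))) 1 := by
    rw [mem_sphere_zero_iff_norm, hg1, EuclideanSpace.norm_single]; norm_num
  have hg2s : g2 ∈ Metric.sphere (0 : EuclideanSpace ℝ (Fin (n+1))) 1 := by
    rw [mem_sphere_zero_iff_norm, hg2, EuclideanSpace.norm_single]; norm_num
  have ng0 : ‖g0‖ = 1 := mem_sphere_zero_iff_norm.1 hg0s
  have ng1 : ‖g1‖ = 1 := mem_sphere_zero_iff_norm.1 hg1s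
  -- coordinate values of the target points
  have hg0_0 : g0 i0 = 1 := by rw [hg0, EuclideanSpace.single_apply]; simp
  have hg0_1 : g0 i1 = 0 := by rw [hg0, EuclideanSpace.single_apply]; simp [hi01.symm]
  have hg0_2 : g0 i2 = 0 := by rw [hg0, EuclideanSpace.single_apply]; simp [hi02.symm]
  have hg1_0 : g1 i0 = 0 := by rw [hg1, EuclideanSpace.single_apply]; simp [hi01]
  have hg1_1 : g1 i1 = 1 := by rw [hg1, EuclideanSpace.single_apply]; simp
  have hg1_2 : g1 i2 = 0 := by rw [hg1, EuclideanSpace.single_apply]; simp [hi12.symm]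
  have hg2_0 : g2 i0 = 0 := by rw [hg2, EuclideanSpace.single_apply]; simp [hi02]
  have hg2_1 : g2 i1 = 0 := by rw [hg2, EuclideanSpace.single_apply]; simp [hi12]
  have hg2_2 : g2 i2 = 1 := by rw [hg2, EuclideanSpace.single_apply]; simp
  -- inner products
  have hinner01 : (inner ℝ g0 g1 : ℝ) = 0 := by
    rw [hg0, EuclideanSpace.inner_single_left]; simp [hg1_0]
  have hinner01' : (inner ℝ g1 g0 : ℝ) = 0 := by
    rw [hg1, EuclideanSpace.inner_single_left]; simp [hg0_1]
  -- points in `ℝ³`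
  set f0 : EuclideanSpace ℝ (Fin 3) := EuclideanSpace.single 0 1 with hf0
  set f1 : EuclideanSpace ℝ (Fin 3) := EuclideanSpace.single 1 1 with hf1
  set f2 : EuclideanSpace ℝ (Fin 3) := EuclideanSpace.single 2 1 with hf2
  have hf0s : f0 ∈ Metric.sphere (0 : EuclideanSpace ℝ (Fin 3)) 1 := by
    rw [mem_sphere_zero_iff_norm, hf0, EuclideanSpace.norm_single]; norm_num
  have hf1s : f1 ∈ Metric.sphere (0 : EuclideanSpace ℝ (Fin 3)) 1 := by
    rw [mem_sphere_zero_iff_norm, hf1, EuclideanSpace.norm_single]; norm_num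
  have hf2s : f2 ∈ Metric.sphere (0 : EuclideanSpace ℝ (Fin 3)) 1 := by
    rw [mem_sphere_zero_iff_norm, hf2, EuclideanSpace.norm_single]; norm_num
  have hnf2s : -f2 ∈ Metric.sphere (0 : EuclideanSpace ℝ (Fin 3)) 1 := by
    rw [mem_sphere_zero_iff_norm, norm_neg, hf2, EuclideanSpace.norm_single]; norm_num
  have tf0_1 : f0 1 = 0 := by rw [hf0, EuclideanSpace.single_apply, if_neg (by decide)]
  have tf0_2 : f0 2 = 0 := by rw [hf0, EuclideanSpace.single_apply, if_neg (by decide)]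
  have tf1_1 : f1 1 = 1 := by rw [hf1, EuclideanSpace.single_apply, if_pos rfl]
  have tf1_2 : f1 2 = 0 := by rw [hf1, EuclideanSpace.single_apply, if_neg (by decide)]
  have tf2_2 : f2 2 = 1 := by rw [hf2, EuclideanSpace.single_apply, if_pos rfl]
  have hne1 : (-f2 : EuclideanSpace ℝ (Fin 3)) ≠ f2 := by
    intro h
    have h' := eapp h 2
    rw [PiLp.neg_apply, tf2_2] at h'
    norm_num at h'
  have hf0ne1 : f0 ≠ f2 := by
    intro h
    have h' := eapp h 2
    rw [tf0_2, tf2_2] at h'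
    norm_num at h'
  have hf0ne2 : f0 ≠ -f2 := by
    intro h
    have h' := eapp h 2
    rw [tf0_2, PiLp.neg_apply, tf2_2] at h'
    norm_num at h'
  have hf0c1 : f0 1 = 0 := tf0_1
  have hf1ne1 : f1 ≠ f2 := by
    intro h
    have h' := eapp h 2
    rw [tf1_2, tf2_2] at h'
    norm_num at h'
  have hf1ne2 : f1 ≠ -f2 := by
    intro h
    have h' := eapp h 2
    rw [tf1_2, PiLp.neg_apply, tf2_2] at h'
    norm_num at h'
  have hf1c1 : f1 1 = 1 := tf1_1
  -- the map
  set T : (Metric.sphere (0 : EuclideanSpace ℝ (Fin 3)) 1) →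
      (Metric.sphere (0 : EuclideanSpace ℝ (Fin (n + 1))) 1) := fun x =>
    if (x : EuclideanSpace ℝ (Fin 3)) = f2 then ⟨g0, hg0s⟩
    else if (x : EuclideanSpace ℝ (Fin 3)) = -f2 then ⟨-g0, hng0s⟩
    else if (x : EuclideanSpace ℝ (Fin 3)) 1 = 0 then ⟨g1, hg1s⟩
    else ⟨g2, hg2s⟩ with hTdef
  -- evaluations
  have hT1 : T ⟨f2, hf2s⟩ = ⟨g0, hg0s⟩ := by
    simp [hTdef]
  have hT2 : T ⟨-f2, hnf2s⟩ = ⟨-g0, hng0s⟩ := by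
    simp [hTdef, hne1]
  have hT3 : T ⟨f0, hf0s⟩ = ⟨g1, hg1s⟩ := by
    simp [hTdef, hf0ne1, hf0ne2, hf0c1]
  have hT4 : T ⟨f1, hf1s⟩ = ⟨g2, hg2s⟩ := by
    simp [hTdef, hf1ne1, hf1ne2, hf1c1]
  refine ⟨T, ?_, ?_, ?_⟩
  · -- weakly circle-preserving
    intro A hA hint
    by_cases h1 : f2 ∈ A
    · by_cases h2 : -f2 ∈ A
      · by_cases h3 : ∃ w : EuclideanSpace ℝ (Fin 3),
            ‖w‖ = 1 ∧ w ∈ A ∧ w 1 = 0 ∧ w ≠ f2 ∧ w ≠ -f2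
        · -- no point of the fourth class: use the plane spanned by g0, g1
          obtain ⟨w, hw1, hwA, hw10, hwN, hwS⟩ := h3
          refine ⟨AffineSubspace.mk' 0 (Submodule.span ℝ ({g0, g1} :
            Set (EuclideanSpace ℝ (Fin (n+1))))), ?_, ?_, ?_⟩
          · rw [AffineSubspace.direction_mk']
            exact finrank_span_pair_two (li_pair (i := i0) (j := i1)
              (by rw [hg0_0]; norm_num) hg1_0 hg0_1 (by rw [hg1_1]; norm_num))
          · exact ⟨0, AffineSubspace.self_mem_mk' _ _, by simp⟩
          · intro p hpA
            simp only [hTdef]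
            split_ifs with e1 e2 e3
            · rw [AffineSubspace.mem_mk', vsub_eq_sub, sub_zero]
              exact Submodule.subset_span (by simp)
            · rw [AffineSubspace.mem_mk', vsub_eq_sub, sub_zero]
              exact Submodule.neg_mem _ (Submodule.subset_span (by simp))
            · rw [AffineSubspace.mem_mk', vsub_eq_sub, sub_zero]
              exact Submodule.subset_span (by simp)
            · exfalso
              have h3le := three_le_of_four_classes A (hf2 ▸ h1) (hf2 ▸ h2)
                hwA hw1 hw10 (hf2 ▸ hwN) (hf2 ▸ hwS) hpA e3
              omega
        · -- no point of the third class: use the plane spanned by g0, g2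
          refine ⟨AffineSubspace.mk' 0 (Submodule.span ℝ ({g0, g2} :
            Set (EuclideanSpace ℝ (Fin (n+1))))), ?_, ?_, ?_⟩
          · rw [AffineSubspace.direction_mk']
            exact finrank_span_pair_two (li_pair (i := i0) (j := i2)
              (by rw [hg0_0]; norm_num) hg2_0 hg0_2 (by rw [hg2_2]; norm_num))
          · exact ⟨0, AffineSubspace.self_mem_mk' _ _, by simp⟩
          · intro p hpA
            simp only [hTdef]
            split_ifs with e1 e2 e3
            · rw [AffineSubspace.mem_mk', vsub_eq_sub, sub_zero]
              exact Submodule.subset_span (by simp)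
            · rw [AffineSubspace.mem_mk', vsub_eq_sub, sub_zero]
              exact Submodule.neg_mem _ (Submodule.subset_span (by simp))
            · exfalso
              exact h3 ⟨p, mem_sphere_zero_iff_norm.1 p.2, hpA, e3, e1, e2⟩
            · rw [AffineSubspace.mem_mk', vsub_eq_sub, sub_zero]
              exact Submodule.subset_span (by simp)
      · -- no point of the second class: plane through g0, g1, g2
        refine ⟨AffineSubspace.mk' g2 (Submodule.span ℝ ({g0 - g2, g1 - g2} :
          Set (EuclideanSpace ℝ (Fin (n+1))))), ?_, ?_, ?_⟩
        · rw [AffineSubspace.direction_mk']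
          refine finrank_span_pair_two (li_pair (i := i0) (j := i1) ?_ ?_ ?_ ?_) <;>
            simp only [PiLp.sub_apply, hg0_0, hg0_1, hg1_0, hg1_1, hg2_0, hg2_1] <;> norm_num
        · refine ⟨(2:ℝ)⁻¹ • (g0 + g1), ?_, ?_⟩
          · rw [AffineSubspace.mem_mk', vsub_eq_sub]
            have he : (2:ℝ)⁻¹ • (g0 + g1) - g2
                = (2:ℝ)⁻¹ • (g0 - g2) + (2:ℝ)⁻¹ • (g1 - g2) := by
              ext t
              simp only [PiLp.sub_apply, PiLp.add_apply, PiLp.smul_apply, smul_eq_mul]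
              ring
            rw [he]
            exact Submodule.add_mem _
              (Submodule.smul_mem _ _ (Submodule.subset_span (by simp)))
              (Submodule.smul_mem _ _ (Submodule.subset_span (by simp)))
          · have hsq : ‖g0 + g1‖ ^ 2 = 2 := by
              rw [norm_add_sq_real, hinner01, ng0, ng1]; norm_num
            have hlt : ‖g0 + g1‖ < 2 := by nlinarith [norm_nonneg (g0 + g1)]
            rw [norm_smul, Real.norm_eq_abs]
            rw [abs_of_pos (by norm_num : (0:ℝ) < (2:ℝ)⁻¹)]
            linarith
        · intro p hpA
          simp only [hTdef]
          split_ifs with e1 e2 e3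
          · rw [AffineSubspace.mem_mk', vsub_eq_sub]
            exact Submodule.subset_span (by simp)
          · exact absurd (e2 ▸ hpA) h2
          · rw [AffineSubspace.mem_mk', vsub_eq_sub]
            exact Submodule.subset_span (by simp)
          · rw [AffineSubspace.mem_mk', vsub_eq_sub, sub_self]
            exact Submodule.zero_mem _
    · -- no point of the first class: plane through -g0, g1, g2
      refine ⟨AffineSubspace.mk' g2 (Submodule.span ℝ ({-g0 - g2, g1 - g2} :
        Set (EuclideanSpace ℝ (Fin (n+1))))), ?_, ?_, ?_⟩
      · rw [AffineSubspace.direction_mk']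
        refine finrank_span_pair_two (li_pair (i := i0) (j := i1) ?_ ?_ ?_ ?_) <;>
          simp only [PiLp.sub_apply, PiLp.neg_apply, hg0_0, hg0_1, hg1_0, hg1_1,
            hg2_0, hg2_1] <;> norm_num
      · refine ⟨(2:ℝ)⁻¹ • (g1 - g0), ?_, ?_⟩
        · rw [AffineSubspace.mem_mk', vsub_eq_sub]
          have he : (2:ℝ)⁻¹ • (g1 - g0) - g2
              = (2:ℝ)⁻¹ • (-g0 - g2) + (2:ℝ)⁻¹ • (g1 - g2) := by
            ext t
            simp only [PiLp.sub_apply, PiLp.add_apply, PiLp.neg_apply, PiLp.smul_apply,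
              smul_eq_mul]
            ring
          rw [he]
          exact Submodule.add_mem _
            (Submodule.smul_mem _ _ (Submodule.subset_span (by simp)))
            (Submodule.smul_mem _ _ (Submodule.subset_span (by simp)))
        · have hsq : ‖g1 - g0‖ ^ 2 = 2 := by
            rw [norm_sub_sq_real, hinner01', ng0, ng1]; norm_num
          have hlt : ‖g1 - g0‖ < 2 := by nlinarith [norm_nonneg (g1 - g0)]
          rw [norm_smul, Real.norm_eq_abs]
          rw [abs_of_pos (by norm_num : (0:ℝ) < (2:ℝ)⁻¹)]
          linarith
      · intro p hpA
        simp only [hTdef]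
        split_ifs with e1 e2 e3
        · exact absurd (e1 ▸ hpA) h1
        · rw [AffineSubspace.mem_mk', vsub_eq_sub]
          exact Submodule.subset_span (by simp)
        · rw [AffineSubspace.mem_mk', vsub_eq_sub]
          exact Submodule.subset_span (by simp)
        · rw [AffineSubspace.mem_mk', vsub_eq_sub, sub_self]
          exact Submodule.zero_mem _
  · -- exactly four points in the image
    have hg0ng0 : (⟨g0, hg0s⟩ : Metric.sphere (0 : EuclideanSpace ℝ (Fin (n+1))) 1)
        ≠ ⟨-g0, hng0s⟩ := by
      intro h
      have := eapp (show g0 = -g0 from congrArg Subtype.val h) i0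
      rw [PiLp.neg_apply, hg0_0] at this
      norm_num at this
    have hg0g1 : (⟨g0, hg0s⟩ : Metric.sphere (0 : EuclideanSpace ℝ (Fin (n+1))) 1)
        ≠ ⟨g1, hg1s⟩ := by
      intro h
      have := eapp (show g0 = g1 from congrArg Subtype.val h) i0
      rw [hg0_0, hg1_0] at this
      norm_num at this
    have hg0g2 : (⟨g0, hg0s⟩ : Metric.sphere (0 : EuclideanSpace ℝ (Fin (n+1))) 1)
        ≠ ⟨g2, hg2s⟩ := by
      intro h
      have := eapp (show g0 = g2 from congrArg Subtype.val h) i0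
      rw [hg0_0, hg2_0] at this
      norm_num at this
    have hng0g1 : (⟨-g0, hng0s⟩ : Metric.sphere (0 : EuclideanSpace ℝ (Fin (n+1))) 1)
        ≠ ⟨g1, hg1s⟩ := by
      intro h
      have := eapp (show -g0 = g1 from congrArg Subtype.val h) i0
      rw [PiLp.neg_apply, hg0_0, hg1_0] at this
      norm_num at this
    have hng0g2 : (⟨-g0, hng0s⟩ : Metric.sphere (0 : EuclideanSpace ℝ (Fin (n+1))) 1)
        ≠ ⟨g2, hg2s⟩ := by
      intro h
      have := eapp (show -g0 = g2 from congrArg Subtype.val h) i0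
      rw [PiLp.neg_apply, hg0_0, hg2_0] at this
      norm_num at this
    have hg1g2 : (⟨g1, hg1s⟩ : Metric.sphere (0 : EuclideanSpace ℝ (Fin (n+1))) 1)
        ≠ ⟨g2, hg2s⟩ := by
      intro h
      have := eapp (show g1 = g2 from congrArg Subtype.val h) i1
      rw [hg1_1, hg2_1] at this
      norm_num at this
    have hR : Set.range T = {⟨g0, hg0s⟩, ⟨-g0, hng0s⟩, ⟨g1, hg1s⟩, ⟨g2, hg2s⟩} := by
      apply Set.eq_of_subset_of_subset
      · rintro y ⟨x, rfl⟩
        simp only [hTdef]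
        split_ifs <;> simp
      · intro y hy
        simp only [Set.mem_insert_iff, Set.mem_singleton_iff] at hy
        rcases hy with h | h | h | h
        · exact ⟨⟨f2, hf2s⟩, by rw [hT1, h]⟩
        · exact ⟨⟨-f2, hnf2s⟩, by rw [hT2, h]⟩
        · exact ⟨⟨f0, hf0s⟩, by rw [hT3, h]⟩
        · exact ⟨⟨f1, hf1s⟩, by rw [hT4, h]⟩
    rw [hR]
    rw [Set.encard_insert_of_notMem (by simp [hg0ng0, hg0g1, hg0g2]),
      Set.encard_insert_of_notMem (by simp [hng0g1, hng0g2]),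
      Set.encard_pair hg1g2]
    rfl
  · -- not all four points on one circle
    rintro ⟨A', hr2, -, hall⟩
    have m1 : g0 ∈ A' := by have h := hall ⟨f2, hf2s⟩; rwa [hT1] at h
    have m2 : -g0 ∈ A' := by have h := hall ⟨-f2, hnf2s⟩; rwa [hT2] at h
    have m3 : g1 ∈ A' := by have h := hall ⟨f0, hf0s⟩; rwa [hT3] at h
    have m4 : g2 ∈ A' := by have h := hall ⟨f1, hf1s⟩; rwa [hT4] at h
    have d0 : g0 ∈ A'.direction := by
      have hmem := AffineSubspace.vsub_mem_direction m1 m2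
      have he : g0 = (2:ℝ)⁻¹ • (g0 -ᵥ -g0) := by
        rw [vsub_eq_sub, sub_neg_eq_add]
        ext t
        simp only [PiLp.smul_apply, PiLp.add_apply, smul_eq_mul]
        ring
      rw [he]
      exact Submodule.smul_mem _ _ hmem
    have d1 : g1 ∈ A'.direction := by
      have hmem := AffineSubspace.vsub_mem_direction m3 m1
      rw [vsub_eq_sub] at hmem
      have he : g1 = (g1 - g0) + g0 := by abel
      rw [he]
      exact Submodule.add_mem _ hmem d0
    have d2 : g2 ∈ A'.direction := by
      have hmem := AffineSubspace.vsub_mem_direction m4 m1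
      rw [vsub_eq_sub] at hmem
      have he : g2 = (g2 - g0) + g0 := by abel
      rw [he]
      exact Submodule.add_mem _ hmem d0
    have h3le := three_le_finrank_of_single_mem hi01 hi02 hi12
      (hg0 ▸ d0) (hg1 ▸ d1) (hg2 ▸ d2)
    omega
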